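/- Fix reals α > 0 and 0 < β < 1 and an integer l ≥ 1, and define τ(d, q) = 1 if q divides d^l, and τ(d, q) = max{−α r^{−β}, −1} otherwise, where r = q / gcd(q, d^l). Let p be a prime, let μ be a real with 1 > μ > 1/2, and let a ≥ 1 be an integer satisfying p^{βal} ≥ (α p^{−β}(1 − μ) + 2μ − 1)/(μ(2μ − 1)). Then for any positive integers s and k, ∑_{j=0}^{s} μ^j τ(p^{aj}, p^k) ≥ −μ^{s+1}/(1 − μ). -/

import Mathlib

/-- `τ(d, q) = 1` if `q ∣ d^l`, and `max{−a r^{−b}, −1}` otherwise, where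
`r = q / gcd(q, d^l)`. -/
noncomputable def tau (a b : ℝ) (l d q : ℕ) : ℝ :=
  if q ∣ d ^ l then 1
  else max (-(a * ((q / Nat.gcd q (d ^ l) : ℕ) : ℝ) ^ (-b))) (-1)

lemma tau_ge_neg_one (a b : ℝ) (l d q : ℕ) : -1 ≤ tau a b l d q := by
  unfold tau
  split
  · norm_num
  · exact le_max_right _ _

lemma tau_of_dvd (a b : ℝ) (l d q : ℕ) (h : q ∣ d ^ l) : tau a b l d q = 1 := by
  unfold tau; rw [if_pos h]

lemma tau_of_lt (a b : ℝ) (l p e j k : ℕ) (hp : 1 < p) (h : e * j * l < k) :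
    tau a b l (p ^ (e * j)) (p ^ k) =
      max (-(a * (((p : ℝ) ^ (k - e * j * l) : ℝ)) ^ (-b))) (-1) := by
  unfold tau
  rw [← pow_mul]
  rw [if_neg (by rw [Nat.pow_dvd_pow_iff_le_right hp]; omega)]
  have hgcd : Nat.gcd (p ^ k) (p ^ (e * j * l)) = p ^ (e * j * l) :=
    Nat.gcd_eq_right (pow_dvd_pow p h.le)
  rw [hgcd, Nat.pow_div h.le (by omega)]
  push_cast
  rfl

set_option maxHeartbeats 1600000 in
/-- If `p` is a prime, `1 > μ > 1/2`, and `e ≥ 1` is an integer with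
`p^{bel} ≥ (a p^{−b}(1 − μ) + 2μ − 1)/(μ(2μ − 1))`, then for all positive integers
`s, k`: `∑_{j=0}^{s} μ^j τ(p^{ej}, p^k) ≥ −μ^{s+1}/(1 − μ)`. -/
theorem stmt_15 (a b : ℝ) (l : ℕ) (ha : 0 < a) (hb0 : 0 < b) (hb1 : b < 1) (hl : 1 ≤ l)
    (p : ℕ) (hp : p.Prime) (μ : ℝ) (hμ1 : μ < 1) (hμ2 : 1 / 2 < μ)
    (e : ℕ) (he : 1 ≤ e)
    (hcond : (a * (p : ℝ) ^ (-b) * (1 - μ) + 2 * μ - 1) / (μ * (2 * μ - 1)) ≤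
      (p : ℝ) ^ (b * (e : ℝ) * (l : ℝ))) :
    ∀ s k : ℕ, 1 ≤ s → 1 ≤ k →
      -(μ ^ (s + 1) / (1 - μ)) ≤
        ∑ j ∈ Finset.range (s + 1), μ ^ j * tau a b l (p ^ (e * j)) (p ^ k) := by
  intro s k hs hk
  have hp1 : 1 < p := hp.one_lt
  set P : ℝ := (p : ℝ) with hPdef
  have hP1 : (1 : ℝ) < P := by rw [hPdef]; exact_mod_cast hp1
  have hP0 : (0 : ℝ) < P := by linarith
  have hμ0 : (0 : ℝ) < μ := by linarith
  have hμne : μ ≠ 1 := ne_of_lt hμ1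
  have h1μ : (0 : ℝ) < 1 - μ := by linarith
  have h2μ : (0 : ℝ) < 2 * μ - 1 := by linarith
  have hel : 0 < e * l := Nat.mul_pos he hl
  set Pb : ℝ := P ^ (-b) with hPbdef
  have hPb0 : 0 < Pb := Real.rpow_pos_of_pos hP0 _
  set y : ℝ := P ^ (-(b * ((e * l : ℕ) : ℝ))) with hydef
  have hy0 : 0 < y := Real.rpow_pos_of_pos hP0 _
  -- rewrite hcond in terms of y
  have hyinv : P ^ (b * (e : ℝ) * (l : ℝ)) = y⁻¹ := by
    rw [hydef, Real.rpow_neg hP0.le, inv_inv]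
    congr 1
    push_cast
    ring
  rw [hyinv] at hcond
  have hcond' : a * Pb * (1 - μ) + 2 * μ - 1 ≤ y⁻¹ * (μ * (2 * μ - 1)) :=
    (div_le_iff₀ (by positivity)).mp hcond
  have key2 : a * Pb * (1 - μ) * y ≤ (2 * μ - 1) * (μ - y) := by
    have h' := mul_le_mul_of_nonneg_right hcond' hy0.le
    have hR : y⁻¹ * (μ * (2 * μ - 1)) * y = μ * (2 * μ - 1) := by
      field_simp
    rw [hR] at h'
    nlinarith [h']
  have hyμ : y < μ := by
    nlinarith [mul_pos (mul_pos (mul_pos ha hPb0) h1μ) hy0, key2, h2μ]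
  have hμy : (0 : ℝ) < μ - y := by linarith
  set w : ℝ := y / (μ - y) with hwdef
  have hw0 : 0 ≤ w := by positivity
  have hwy : w * (μ - y) = y := div_mul_cancel₀ _ (ne_of_gt hμy)
  have keyw : a * Pb * (1 - μ) * w ≤ 2 * μ - 1 := by
    rw [← mul_le_mul_iff_of_pos_right hμy]
    calc a * Pb * (1 - μ) * w * (μ - y) = a * Pb * (1 - μ) * (w * (μ - y)) := by ring
      _ = a * Pb * (1 - μ) * y := by rw [hwy]
      _ ≤ (2 * μ - 1) * (μ - y) := key2
  -- the key scalar inequality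
  have K0 : (1 + a * Pb * w) * (1 - μ) ≤ μ := by nlinarith [keyw]
  -- set up the splitting index
  set t : ℕ := min s ((k - 1) / (e * l)) with htdef
  have hts : t ≤ s := min_le_left _ _
  have ht1 : e * t * l + 1 ≤ k := by
    have h' : t ≤ (k - 1) / (e * l) := min_le_right _ _
    have h'' : t * (e * l) ≤ k - 1 := (Nat.le_div_iff_mul_le hel).mp h'
    have heq : e * t * l = t * (e * l) := by ring
    omega
  have ht2 : ∀ j, t < j → j ≤ s → k ≤ e * j * l := by
    intro j hj hjs
    rcases lt_or_ge ((k - 1) / (e * l)) j with h | h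
    · have h' := (Nat.div_lt_iff_lt_mul hel).mp h
      have heq : e * j * l = j * (e * l) := by ring
      omega
    · have : j ≤ t := le_min hjs h
      omega
  set x : ℝ := y / μ with hxdef
  have hx0 : 0 ≤ x := by positivity
  have hx1 : x < 1 := by rw [hxdef, div_lt_one hμ0]; linarith
  have hxw : x * (1 - x)⁻¹ = w := by
    rw [hxdef, hwdef]
    rw [show (1 : ℝ) - y / μ = (μ - y) / μ by field_simp]
    field_simp
  set f : ℕ → ℝ := fun j => μ ^ j * tau a b l (p ^ (e * j)) (p ^ k) with hfdef
  -- per-term bound for j < t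
  have hterm : ∀ j ∈ Finset.range t, -(a * Pb * μ ^ t * x ^ (t - j)) ≤ f j := by
    intro j hj
    have hjt : j < t := Finset.mem_range.mp hj
    obtain ⟨m, hm⟩ : ∃ m, t = j + (m + 1) := ⟨t - j - 1, by omega⟩
    have htj : t - j = m + 1 := by omega
    have hjk : e * j * l + (1 + e * l * (m + 1)) ≤ k := by
      have heq : e * j * l + e * l * (m + 1) = e * t * l := by rw [hm]; ring
      omega
    have hjlk : e * j * l < k := by omega
    set n : ℕ := k - e * j * l with hndef
    have hn : 1 + e * l * (m + 1) ≤ n := by omega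
    have htau : -(a * P ^ (-(b * (n : ℝ)))) ≤ tau a b l (p ^ (e * j)) (p ^ k) := by
      rw [tau_of_lt a b l p e j k hp1 hjlk]
      refine le_trans (le_of_eq ?_) (le_max_left _ _)
      congr 1
      rw [← Real.rpow_natCast P (k - e * j * l), ← Real.rpow_mul hP0.le]
      congr 1
      rw [← hndef]
      ring
    have hyp : y ^ (m + 1) = P ^ ((-(b * ((e * l : ℕ) : ℝ))) * ((m + 1 : ℕ) : ℝ)) := by
      rw [hydef, ← Real.rpow_natCast (P ^ (-(b * ((e * l : ℕ) : ℝ)))) (m + 1),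
        ← Real.rpow_mul hP0.le]
    have hrb : P ^ (-(b * (n : ℝ))) ≤ Pb * y ^ (m + 1) := by
      rw [hyp, hPbdef, ← Real.rpow_add hP0]
      rw [Real.rpow_le_rpow_left_iff hP1]
      have hcast : (1 : ℝ) + ((e * l : ℕ) : ℝ) * ((m + 1 : ℕ) : ℝ) ≤ (n : ℝ) := by
        exact_mod_cast hn
      push_cast at hcast ⊢
      have h' := mul_le_mul_of_nonneg_left hcast hb0.le
      linarith [h']
    have hx_eq : μ ^ j * y ^ (m + 1) = μ ^ t * x ^ (m + 1) := by
      rw [hm, hxdef, div_pow, pow_add]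
      field_simp
      ring
    have h1 : a * P ^ (-(b * (n : ℝ))) ≤ a * (Pb * y ^ (m + 1)) :=
      mul_le_mul_of_nonneg_left hrb ha.le
    calc -(a * Pb * μ ^ t * x ^ (t - j))
        = μ ^ j * (-(a * (Pb * y ^ (m + 1)))) := by
          rw [htj]
          linear_combination a * Pb * hx_eq
      _ ≤ μ ^ j * (-(a * P ^ (-(b * (n : ℝ))))) := by
          apply mul_le_mul_of_nonneg_left _ (by positivity)
          exact neg_le_neg h1
      _ ≤ f j := mul_le_mul_of_nonneg_left htau (by positivity)
  -- geometric sum bound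
  have hgeom : ∑ j ∈ Finset.range t, x ^ (t - j) ≤ x * (1 - x)⁻¹ := by
    have hrefl : ∑ j ∈ Finset.range t, x ^ (t - j) = ∑ j ∈ Finset.range t, x ^ (j + 1) := by
      rw [← Finset.sum_range_reflect]
      apply Finset.sum_congr rfl
      intro j hj
      have hj' : j < t := Finset.mem_range.mp hj
      congr 1
      omega
    rw [hrefl]
    have h1 : ∑ j ∈ Finset.range t, x ^ (j + 1) = x * ∑ j ∈ Finset.range t, x ^ j := by
      rw [Finset.mul_sum]
      apply Finset.sum_congr rfl
      intro j _
      ring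
    rw [h1]
    have hx1' : (0 : ℝ) < 1 - x := by linarith
    have h2 : ∑ j ∈ Finset.range t, x ^ j ≤ (1 - x)⁻¹ := by
      rw [geom_sum_eq (ne_of_lt hx1)]
      have h3 : (x ^ t - 1) / (x - 1) = (1 - x ^ t) / (1 - x) := by
        rw [div_eq_div_iff (by linarith) (by linarith)]
        ring
      rw [h3, ← one_div, div_le_div_iff₀ hx1' hx1']
      linarith [mul_nonneg (pow_nonneg hx0 t) (le_of_lt hx1')]
    exact mul_le_mul_of_nonneg_left h2 hx0
  have hA : -(a * Pb * μ ^ t * (x * (1 - x)⁻¹)) ≤ ∑ j ∈ Finset.range t, f j := by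
    have h0 : (0 : ℝ) ≤ a * Pb * μ ^ t := by positivity
    calc -(a * Pb * μ ^ t * (x * (1 - x)⁻¹))
        ≤ -(a * Pb * μ ^ t * ∑ j ∈ Finset.range t, x ^ (t - j)) := by
          have := mul_le_mul_of_nonneg_left hgeom h0
          linarith
      _ = ∑ j ∈ Finset.range t, -(a * Pb * μ ^ t * x ^ (t - j)) := by
          rw [Finset.mul_sum]
          rw [← Finset.sum_neg_distrib]
      _ ≤ ∑ j ∈ Finset.range t, f j := Finset.sum_le_sum hterm
  have htop : -(μ ^ t) ≤ f t := by
    have h1 := mul_le_mul_of_nonneg_left (tau_ge_neg_one a b l (p ^ (e * t)) (p ^ k))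
      (pow_nonneg hμ0.le t)
    simpa using h1
  have hB : ∑ j ∈ Finset.Ico (t + 1) (s + 1), f j = (μ ^ (t + 1) - μ ^ (s + 1)) / (1 - μ) := by
    have hone : ∀ j ∈ Finset.Ico (t + 1) (s + 1), f j = μ ^ j := by
      intro j hj
      rw [Finset.mem_Ico] at hj
      have hdvd : p ^ k ∣ (p ^ (e * j)) ^ l := by
        rw [← pow_mul]
        exact pow_dvd_pow p (ht2 j (by omega) (by omega))
      rw [hfdef]
      simp only
      rw [tau_of_dvd a b l _ _ hdvd, mul_one]
    rw [Finset.sum_congr rfl hone, geom_sum_Ico hμne (by omega)]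
    rw [div_eq_div_iff (by linarith) (by linarith)]
    ring
  have hsplit : ∑ j ∈ Finset.range (s + 1), f j =
      (∑ j ∈ Finset.range t, f j + f t) + ∑ j ∈ Finset.Ico (t + 1) (s + 1), f j := by
    rw [← Finset.sum_range_succ f t]
    rw [Finset.range_eq_Ico, Finset.range_eq_Ico]
    exact (Finset.sum_Ico_consecutive f (Nat.zero_le _) (Nat.succ_le_succ hts)).symm
  -- final scalar step
  have Kt : μ ^ t * (1 + a * Pb * w) ≤ μ ^ (t + 1) / (1 - μ) := by
    rw [le_div_iff₀ h1μ]
    calc μ ^ t * (1 + a * Pb * w) * (1 - μ) = μ ^ t * ((1 + a * Pb * w) * (1 - μ)) := by ring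
      _ ≤ μ ^ t * μ := mul_le_mul_of_nonneg_left K0 (pow_nonneg hμ0.le t)
      _ = μ ^ (t + 1) := by ring
  have hfin : -(μ ^ (s + 1) / (1 - μ)) ≤
      -(a * Pb * μ ^ t * w) - μ ^ t + (μ ^ (t + 1) - μ ^ (s + 1)) / (1 - μ) := by
    have hexp : (μ ^ (t + 1) - μ ^ (s + 1)) / (1 - μ) =
        μ ^ (t + 1) / (1 - μ) - μ ^ (s + 1) / (1 - μ) := by ring
    rw [hexp]
    linarith [Kt]
  calc -(μ ^ (s + 1) / (1 - μ))
      ≤ -(a * Pb * μ ^ t * w) - μ ^ t + (μ ^ (t + 1) - μ ^ (s + 1)) / (1 - μ) := hfin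
    _ ≤ (∑ j ∈ Finset.range t, f j + f t) + ∑ j ∈ Finset.Ico (t + 1) (s + 1), f j := by
        rw [hB, ← hxw]
        linarith [hA, htop]
    _ = ∑ j ∈ Finset.range (s + 1), f j := hsplit.symm
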